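/- Let (β,δ) lie in the polynomial regime 𝒫 (so that 1 − β − 2δ < 0) and fix K > 0. With 𝔖_N := 2m/(ρ + 2m) (the sum of the alternating series Σ_{k≥0} (−1)^k (2m/ρ)^{k+1}) and d_N(n) := ∏_{j=1}^{n} (q_j/p_j), one has, uniformly over 1 ≤ n ≤ ⌊K N^{1−δ/2}⌋, that log d_N(n) = −(1−ρ) 𝔖_N n + 𝔖_N n²/(2N) + 𝔖_N(1 − 𝔖_N/2) n³/(3N²) + o(1) as N → ∞; that is, sup_{1 ≤ n ≤ ⌊K N^{1−δ/2}⌋} | log d_N(n) + (1−ρ) 𝔖_N n − 𝔖_N n²/(2N) − 𝔖_N(1 − 𝔖_N/2) n³/(3N²) | → 0. -/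

import Mathlib

set_option maxHeartbeats 1000000


open Filter Finset

namespace MullerRatchet6

/-- Per-capita upward rate of the time-rescaled best-class process:
`p_n = (1/(2m) + 1/ρ)(1 − n/N)` with `m = N^{−β}`, `ρ = 1 − N^{−δ}`. -/
noncomputable def pr (β δ : ℝ) (N n : ℕ) : ℝ :=
  (1 / (2 * (N:ℝ)^(-β)) + 1 / (1 - (N:ℝ)^(-δ))) * (1 - (n:ℝ)/(N:ℝ))

/-- Per-capita downward rate `q_n = (1/(2m))(1 − n/N) + 1` with `m = N^{−β}`. -/
noncomputable def qr (β : ℝ) (N n : ℕ) : ℝ :=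
  (1 / (2 * (N:ℝ)^(-β))) * (1 - (n:ℝ)/(N:ℝ)) + 1

/-- Odds-ratio product `d_N(n) = ∏_{j=1}^{n} q_j/p_j`. -/
noncomputable def d (β δ : ℝ) (N n : ℕ) : ℝ :=
  ∏ j ∈ Finset.Icc 1 n, qr β N j / pr β δ N j

/-- `𝔖_N = 2m/(ρ + 2m)`, the sum of the alternating series `Σ_{k≥0} (−1)^k (2m/ρ)^{k+1}`. -/
noncomputable def Sfrak (β δ : ℝ) (N : ℕ) : ℝ :=
  2 * (N:ℝ)^(-β) / ((1 - (N:ℝ)^(-δ)) + 2 * (N:ℝ)^(-β))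


lemma abs_log_sub_quad (u : ℝ) (hu : |u| ≤ 1/2) :
    |Real.log (1 + u) - (u - u^2/2)| ≤ 2 * |u|^3 := by
  have h1 : |(-u : ℝ)| < 1 := by rw [abs_neg]; linarith
  have key := Real.abs_log_sub_add_sum_range_le h1 2
  rw [Finset.sum_range_succ, Finset.sum_range_succ, Finset.sum_range_zero] at key
  have h2 : (1 : ℝ) - -u = 1 + u := by ring
  rw [h2, abs_neg] at key
  have h3 : (0:ℝ) + (-u)^(0+1)/((0:ℕ)+1) + (-u)^(1+1)/((1:ℕ)+1) = -(u - u^2/2) := by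
    push_cast; ring
  rw [h3] at key
  have h4 : |u|^(2+1)/(1-|u|) ≤ 2 * |u|^3 := by
    have e : |u|^(2+1) = |u|^3 := by norm_num
    rw [e, div_le_iff₀ (by linarith)]
    have h5 := mul_nonneg (pow_nonneg (abs_nonneg u) 3) (by linarith : (0:ℝ) ≤ 1 - 2*|u|)
    nlinarith
  have h6 : Real.log (1+u) - (u - u^2/2) = -(u-u^2/2) + Real.log (1+u) := by ring
  rw [h6]; exact key.trans h4


lemma per_term (S T s t : ℝ) (hS0 : 0 < S) (hS1 : S ≤ 1) (hT0 : 0 < T) (hT : T ≤ 1/2)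
    (ht0 : 0 ≤ t) (ht : t ≤ T) (hs0 : 0 ≤ s) (hs : s ≤ T) (hST : S*T ≤ 1/8) :
    |Real.log (1 + S*(t-s)/(1-t)) - (S*t + (S - S^2/2)*t^2 - s*S)|
      ≤ 128*S^3*T^3 + 4*S*T^3 + s*S*T + 5*S^2*T*(s+T^2) := by
  have h1t : (1:ℝ)/2 ≤ 1 - t := by linarith
  have h1t0 : (0:ℝ) < 1 - t := by linarith
  set u := S*(t-s)/(1-t) with hu_def
  have hts : |t - s| ≤ T := abs_le.mpr ⟨by linarith, by linarith⟩
  have hST0 : (0:ℝ) ≤ S*T := le_of_lt (mul_pos hS0 hT0)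
  have habs : |u| = S * |t-s| / (1-t) := by
    rw [hu_def, abs_div, abs_mul, abs_of_pos hS0, abs_of_pos h1t0]
  have huabs : |u| ≤ 2*S*T := by
    rw [habs, div_le_iff₀ h1t0]
    nlinarith [mul_le_mul_of_nonneg_left hts hS0.le,
      mul_nonneg hST0 (by linarith : (0:ℝ) ≤ 1-2*t)]
  have hu2 : |u| ≤ 1/2 := by linarith
  have hlog := abs_log_sub_quad u hu2
  have hlog3 : 2*|u|^3 ≤ 128*S^3*T^3 := by
    have h := pow_le_pow_left₀ (abs_nonneg u) huabs 3
    nlinarith [pow_nonneg hST0 3]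
  have hid : u - u^2/2 - (S*t + (S - S^2/2)*t^2 - s*S)
      = S*(t-s)*t^2/(1-t) + (-(s*S*t)) + (S*t - u)*(S*t + u)/2 := by
    rw [hu_def]; field_simp; ring
  have hA : |S*(t-s)*t^2/(1-t)| ≤ 4*S*T^3 := by
    rw [abs_div, abs_of_pos h1t0, abs_mul, abs_mul, abs_of_pos hS0,
      abs_of_nonneg (sq_nonneg t : (0:ℝ) ≤ t^2), div_le_iff₀ h1t0]
    nlinarith [mul_le_mul_of_nonneg_left hts hS0.le, pow_le_pow_left₀ ht0 ht 2,
      mul_nonneg (mul_nonneg hS0.le hT0.le) (mul_nonneg hT0.le hT0.le),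
      abs_nonneg (t-s), sq_nonneg t]
  have hB : |(-(s*S*t))| ≤ s*S*T := by
    rw [abs_neg, abs_of_nonneg (by positivity)]
    nlinarith [mul_nonneg hs0 hS0.le]
  have hCu : |S*t - u| ≤ 2*S*(s+T^2) := by
    have e : S*t - u = S*(s - t^2)/(1-t) := by rw [hu_def]; field_simp; ring
    rw [e, abs_div, abs_mul, abs_of_pos hS0, abs_of_pos h1t0, div_le_iff₀ h1t0]
    have ht2 : t^2 ≤ T^2 := pow_le_pow_left₀ ht0 ht 2
    have hst2 : |s - t^2| ≤ s + T^2 := abs_le.mpr ⟨by linarith [sq_nonneg t], by linarith [sq_nonneg t]⟩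
    nlinarith [mul_le_mul_of_nonneg_left hst2 hS0.le,
      mul_nonneg (mul_nonneg hS0.le (by positivity : (0:ℝ) ≤ s+T^2)) (by linarith : (0:ℝ) ≤ 1-2*t)]
  have hCv : |S*t + u| ≤ 3*S*T := by
    calc |S*t+u| ≤ |S*t| + |u| := abs_add_le _ _
      _ ≤ S*T + 2*S*T := by
          have : |S*t| = S*t := abs_of_nonneg (by positivity)
          rw [this]
          nlinarith [mul_le_mul_of_nonneg_left ht hS0.le]
      _ = 3*S*T := by ring
  have hC : |(S*t - u)*(S*t + u)/2| ≤ 5*S^2*T*(s+T^2) := by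
    calc |(S*t-u)*(S*t+u)/2| = |S*t-u| * |S*t+u| / 2 := by
          rw [abs_div, abs_mul]; norm_num
      _ ≤ (2*S*(s+T^2))*(3*S*T)/2 := by
          have := mul_le_mul hCu hCv (abs_nonneg _) (by positivity : (0:ℝ) ≤ 2*S*(s+T^2))
          linarith
      _ ≤ 5*S^2*T*(s+T^2) := by
          nlinarith [mul_nonneg (mul_nonneg (mul_nonneg hS0.le hS0.le) hT0.le)
            (by positivity : (0:ℝ) ≤ s+T^2)]
  calc |Real.log (1+u) - (S*t + (S - S^2/2)*t^2 - s*S)|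
      = |(Real.log (1+u) - (u - u^2/2)) + (u - u^2/2 - (S*t + (S - S^2/2)*t^2 - s*S))| := by
        ring_nf
    _ ≤ |Real.log (1+u) - (u - u^2/2)| + |u - u^2/2 - (S*t + (S - S^2/2)*t^2 - s*S)| :=
        abs_add_le _ _
    _ ≤ 2*|u|^3 + (|S*(t-s)*t^2/(1-t)| + |(-(s*S*t))| + |(S*t - u)*(S*t + u)/2|) := by
        rw [hid]
        have := (abs_add_three (S*(t-s)*t^2/(1-t)) (-(s*S*t)) ((S*t - u)*(S*t + u)/2))
        exact add_le_add hlog this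
    _ ≤ 128*S^3*T^3 + 4*S*T^3 + s*S*T + 5*S^2*T*(s+T^2) := by
        have := add_le_add (add_le_add hA hB) hC
        linarith

lemma sum_Icc_id (n : ℕ) : ∑ j ∈ Icc 1 n, (j:ℝ) = n*(n+1)/2 := by
  induction n with
  | zero => simp
  | succ k ih =>
    rw [Finset.sum_Icc_succ_top (Nat.succ_le_succ k.zero_le), ih]
    push_cast; ring

lemma sum_Icc_sq (n : ℕ) : ∑ j ∈ Icc 1 n, (j:ℝ)^2 = n*(n+1)*(2*n+1)/6 := by
  induction n with
  | zero => simp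
  | succ k ih =>
    rw [Finset.sum_Icc_succ_top (Nat.succ_le_succ k.zero_le), ih]
    push_cast; ring


lemma ratio_eq (β δ : ℝ) (N j : ℕ) (hm0 : 0 < (N:ℝ)^(-β)) (hρ0 : 0 < 1 - (N:ℝ)^(-δ))
    (hx0 : 0 < 1 - (j:ℝ)/N) :
    qr β N j / pr β δ N j
      = 1 + Sfrak β δ N * ((j:ℝ)/N - (N:ℝ)^(-δ))/(1 - (j:ℝ)/N) := by
  unfold qr pr Sfrak
  have h1 : (2 * (N:ℝ)^(-β)) ≠ 0 := by positivity
  have h2 : (1 - (N:ℝ)^(-δ)) ≠ 0 := hρ0.ne'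
  have h3 : (1 - (j:ℝ)/N) ≠ 0 := hx0.ne'
  have h4 : (1 - (N:ℝ)^(-δ)) + 2 * (N:ℝ)^(-β) ≠ 0 := by positivity
  field_simp
  ring

lemma pr_pos (β δ : ℝ) (N j : ℕ) (hm0 : 0 < (N:ℝ)^(-β)) (hρ0 : 0 < 1 - (N:ℝ)^(-δ))
    (hx0 : 0 < 1 - (j:ℝ)/N) : 0 < pr β δ N j := by
  unfold pr
  have : 0 < 1 / (2 * (N:ℝ)^(-β)) + 1 / (1 - (N:ℝ)^(-δ)) := by positivity
  exact mul_pos this hx0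

lemma qr_pos (β : ℝ) (N j : ℕ) (hm0 : 0 < (N:ℝ)^(-β)) (hx0 : 0 < 1 - (j:ℝ)/N) :
    0 < qr β N j := by
  unfold qr
  have : 0 ≤ (1 / (2 * (N:ℝ)^(-β))) * (1 - (j:ℝ)/N) := by positivity
  linarith

/-- The explicit bound function. -/
noncomputable def G (β δ K : ℝ) (N : ℕ) : ℝ :=
  K*(N:ℝ)^(1-δ/2) * (128*(4*(N:ℝ)^(-β))^3*(K*(N:ℝ)^(-δ/2))^3
      + 4*(4*(N:ℝ)^(-β))*(K*(N:ℝ)^(-δ/2))^3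
      + (N:ℝ)^(-δ)*(4*(N:ℝ)^(-β))*(K*(N:ℝ)^(-δ/2))
      + 5*(4*(N:ℝ)^(-β))^2*(K*(N:ℝ)^(-δ/2))*((N:ℝ)^(-δ)+(K*(N:ℝ)^(-δ/2))^2))
    + (4*(N:ℝ)^(-β))*(K*(N:ℝ)^(-δ/2))/2 + (4*(N:ℝ)^(-β))*(K*(N:ℝ)^(-δ/2))^2


lemma main_est (β δ K : ℝ) (hK : 0 < K) (N : ℕ)
    (hN1 : 1 ≤ N)
    (hA2 : (N:ℝ)^(-δ) ≤ 1/2)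
    (hA3 : K*(N:ℝ)^(-δ/2) ≤ 1/2)
    (hA4 : (N:ℝ)^(-δ/2) ≤ K)
    (hA5 : (N:ℝ)^(-β) ≤ 1/(32*K))
    (hA6 : (N:ℝ)^(-δ/2) ≤ 1)
    (n : ℕ) (hn1 : 1 ≤ n) (hn2 : (n:ℝ) ≤ K*(N:ℝ)^(1-δ/2)) :
    |Real.log (d β δ N n)
        + (N:ℝ)^(-δ) * Sfrak β δ N * (n:ℝ)
        - Sfrak β δ N * (n:ℝ)^2 / (2 * (N:ℝ))
        - Sfrak β δ N * (1 - Sfrak β δ N / 2) * (n:ℝ)^3 / (3 * (N:ℝ)^2)|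
      ≤ G β δ K N := by
  have hN0 : (0:ℝ) < N := by exact_mod_cast Nat.lt_of_lt_of_le Nat.zero_lt_one hN1
  have hm0 : (0:ℝ) < (N:ℝ)^(-β) := Real.rpow_pos_of_pos hN0 _
  have hs0 : (0:ℝ) < (N:ℝ)^(-δ) := Real.rpow_pos_of_pos hN0 _
  have hy0 : (0:ℝ) < (N:ℝ)^(-δ/2) := Real.rpow_pos_of_pos hN0 _
  have hρ : (1:ℝ)/2 ≤ 1 - (N:ℝ)^(-δ) := by linarith
  set s : ℝ := (N:ℝ)^(-δ) with hs_def
  set S : ℝ := Sfrak β δ N with hS_def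
  set T : ℝ := K*(N:ℝ)^(-δ/2) with hT_def
  have hT0 : 0 < T := by rw [hT_def]; positivity
  clear_value s S T
  have hden : (0:ℝ) < (1-s) + 2*(N:ℝ)^(-β) := by linarith
  have hS0 : 0 < S := by
    rw [hS_def, Sfrak, ← hs_def]; exact div_pos (by positivity) hden
  have hS1 : S ≤ 1 := by
    rw [hS_def, Sfrak, ← hs_def, div_le_one hden]; linarith
  have hSbar : S ≤ 4*(N:ℝ)^(-β) := by
    rw [hS_def, Sfrak, ← hs_def, div_le_iff₀ hden]; nlinarith
  have hyK : (N:ℝ)^(-β) * (N:ℝ)^(-δ/2) ≤ 1/(32*K) := by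
    nlinarith [mul_le_mul_of_nonneg_left hA6 hm0.le]
  have hBT : (4*(N:ℝ)^(-β))*T ≤ 1/8 := by
    have h2 : 4*K*((N:ℝ)^(-β) * (N:ℝ)^(-δ/2)) ≤ 4*K*(1/(32*K)) :=
      mul_le_mul_of_nonneg_left hyK (by positivity)
    have h3 : 4*K*(1/(32*K)) = 1/8 := by field_simp; ring
    calc (4*(N:ℝ)^(-β))*T = 4*K*((N:ℝ)^(-β) * (N:ℝ)^(-δ/2)) := by rw [hT_def]; ring
      _ ≤ 1/8 := by rw [← h3]; exact h2
  have hST : S*T ≤ 1/8 :=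
    le_trans (mul_le_mul_of_nonneg_right hSbar hT0.le) hBT
  have hT12 : T ≤ 1/2 := hA3
  have hsT : s ≤ T := by
    have he : s = (N:ℝ)^(-δ/2) * (N:ℝ)^(-δ/2) := by
      rw [hs_def, ← Real.rpow_add hN0]; norm_num
    rw [he, hT_def]
    exact mul_le_mul_of_nonneg_right hA4 hy0.le
  have hpow1 : (N:ℝ)^(1-δ/2) = (N:ℝ)^(-δ/2) * (N:ℝ) := by
    rw [show (1-δ/2 : ℝ) = -δ/2 + 1 by ring, Real.rpow_add hN0, Real.rpow_one]
  have htn : (n:ℝ)/N ≤ T := by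
    rw [div_le_iff₀ hN0]
    calc (n:ℝ) ≤ K*(N:ℝ)^(1-δ/2) := hn2
      _ = T*N := by rw [hpow1, hT_def]; ring
  set B : ℝ := 4*(N:ℝ)^(-β) with hB_def
  clear_value B
  have hB0 : 0 < B := by rw [hB_def]; positivity
  -- scalar inequalities (small context)
  have hc0 : (0:ℝ) ≤ S - S^2/2 := by nlinarith [mul_le_mul_of_nonneg_left hS1 hS0.le]
  have hcS : S - S^2/2 ≤ S := by nlinarith [sq_nonneg S]
  have hn0' : (0:ℝ) ≤ (n:ℝ) := Nat.cast_nonneg n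
  have hn1' : (1:ℝ) ≤ (n:ℝ) := by exact_mod_cast hn1
  have hq1 : S*(n:ℝ)/(2*N) ≤ B*T/2 := by
    have h := mul_le_mul hSbar htn (by positivity) hB0.le
    calc S*(n:ℝ)/(2*N) = S*((n:ℝ)/N)/2 := by ring
      _ ≤ B*T/2 := by linarith
  have hq2 : (S-S^2/2)*(3*(n:ℝ)^2+(n:ℝ))/(6*(N:ℝ)^2) ≤ B*T^2 := by
    have h2 : ((n:ℝ)/N)^2 ≤ T^2 := pow_le_pow_left₀ (by positivity) htn 2
    have k0 : (0:ℝ) ≤ 3*(n:ℝ)^2+(n:ℝ) := by positivity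
    have k1 : (S-S^2/2)*(3*(n:ℝ)^2+(n:ℝ)) ≤ S*(3*(n:ℝ)^2+(n:ℝ)) :=
      mul_le_mul_of_nonneg_right hcS k0
    have k2 : 3*(n:ℝ)^2+(n:ℝ) ≤ 6*(n:ℝ)^2 := by
      have h : (n:ℝ)*1 ≤ (n:ℝ)*(n:ℝ) := mul_le_mul_of_nonneg_left hn1' hn0'
      have h2' : (n:ℝ)^2 = (n:ℝ)*(n:ℝ) := by ring
      linarith
    have k3 : S*(3*(n:ℝ)^2+(n:ℝ)) ≤ S*(6*(n:ℝ)^2) := mul_le_mul_of_nonneg_left k2 hS0.le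
    have key : (S-S^2/2)*(3*(n:ℝ)^2+(n:ℝ)) ≤ 6*(S*(n:ℝ)^2) := by linarith
    have e : (S-S^2/2)*(3*(n:ℝ)^2+(n:ℝ))/(6*(N:ℝ)^2) ≤ S*(n:ℝ)^2/(N:ℝ)^2 := by
      rw [div_le_div_iff₀ (by positivity) (by positivity)]
      nlinarith [mul_le_mul_of_nonneg_right key (sq_nonneg (N:ℝ))]
    have e2 : S*((n:ℝ)/N)^2 ≤ B*T^2 := mul_le_mul hSbar h2 (by positivity) hB0.le
    have e3 : S*(n:ℝ)^2/(N:ℝ)^2 = S*((n:ℝ)/N)^2 := by rw [div_pow]; ring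
    rw [e3] at e
    linarith
  set R : ℝ := 128*S^3*T^3 + 4*S*T^3 + s*S*T + 5*S^2*T*(s+T^2) with hR_def
  clear_value R
  have hR0 : 0 ≤ R := by
    rw [hR_def]
    have a1 : (0:ℝ) ≤ S^3*T^3 := mul_nonneg (pow_nonneg hS0.le 3) (pow_nonneg hT0.le 3)
    have a2 : (0:ℝ) ≤ S*T^3 := mul_nonneg hS0.le (pow_nonneg hT0.le 3)
    have a3 : (0:ℝ) ≤ s*S*T := mul_nonneg (mul_nonneg hs0.le hS0.le) hT0.le
    have a4 : (0:ℝ) ≤ S^2*T*(s+T^2) := mul_nonneg (mul_nonneg (sq_nonneg S) hT0.le)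
      (add_nonneg hs0.le (sq_nonneg T))
    linarith
  have hRbar : R ≤ 128*B^3*T^3 + 4*B*T^3 + s*B*T + 5*B^2*T*(s+T^2) := by
    rw [hR_def]
    have hsT2 : (0:ℝ) ≤ s + T^2 := add_nonneg hs0.le (sq_nonneg T)
    have b1 : S^3 ≤ B^3 := pow_le_pow_left₀ hS0.le hSbar 3
    have b2 : S^2 ≤ B^2 := pow_le_pow_left₀ hS0.le hSbar 2
    have c1 : S^3*T^3 ≤ B^3*T^3 := mul_le_mul_of_nonneg_right b1 (pow_nonneg hT0.le 3)
    have c2 : S*T^3 ≤ B*T^3 := mul_le_mul_of_nonneg_right hSbar (pow_nonneg hT0.le 3)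
    have c3 : s*S*T ≤ s*B*T :=
      mul_le_mul_of_nonneg_right (mul_le_mul_of_nonneg_left hSbar hs0.le) hT0.le
    have c4 : S^2*T*(s+T^2) ≤ B^2*T*(s+T^2) :=
      mul_le_mul_of_nonneg_right (mul_le_mul_of_nonneg_right b2 hT0.le) hsT2
    linarith
  -- sums
  have hjx : ∀ j ∈ Icc 1 n, (0:ℝ) < 1 - (j:ℝ)/N := by
    intro j hj
    have hjn : (j:ℝ)/N ≤ (n:ℝ)/N := by
      have h : (j:ℝ) ≤ n := by exact_mod_cast (Finset.mem_Icc.mp hj).2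
      gcongr
    linarith
  have hjT : ∀ j ∈ Icc 1 n, (j:ℝ)/N ≤ T := by
    intro j hj
    have hjn : (j:ℝ)/N ≤ (n:ℝ)/N := by
      have h : (j:ℝ) ≤ n := by exact_mod_cast (Finset.mem_Icc.mp hj).2
      gcongr
    linarith
  have hlogd : Real.log (d β δ N n)
      = ∑ j ∈ Icc 1 n, Real.log (1 + S*((j:ℝ)/N - s)/(1 - (j:ℝ)/N)) := by
    rw [d, Real.log_prod]
    · refine Finset.sum_congr rfl fun j hj => ?_
      rw [ratio_eq β δ N j hm0 (by rw [← hs_def]; linarith) (hjx j hj), ← hS_def, ← hs_def]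
    · intro j hj
      exact div_ne_zero (qr_pos β N j hm0 (hjx j hj)).ne'
        (pr_pos β δ N j hm0 (by rw [← hs_def]; linarith) (hjx j hj)).ne'
  set W : ℝ := ∑ j ∈ Icc 1 n, (S*((j:ℝ)/N) + (S - S^2/2)*((j:ℝ)/N)^2 - s*S) with hW_def
  have hsumW : W = S*((n:ℝ)*((n:ℝ)+1))/(2*N)
      + (S - S^2/2)*((n:ℝ)*((n:ℝ)+1)*(2*(n:ℝ)+1))/(6*(N:ℝ)^2) - s*S*n := by
    rw [hW_def]
    have e1 : ∀ j ∈ Icc 1 n, S*((j:ℝ)/N) + (S-S^2/2)*((j:ℝ)/N)^2 - s*S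
        = (S/N)*(j:ℝ) + ((S-S^2/2)/(N:ℝ)^2)*(j:ℝ)^2 - s*S := by
      intro j _; field_simp
    rw [Finset.sum_congr rfl e1, Finset.sum_sub_distrib, Finset.sum_add_distrib,
      ← Finset.mul_sum, ← Finset.mul_sum, sum_Icc_id, sum_Icc_sq, Finset.sum_const,
      Nat.card_Icc, Nat.add_sub_cancel, nsmul_eq_mul]
    field_simp
  clear_value W
  have hΔ : |(∑ j ∈ Icc 1 n, Real.log (1 + S*((j:ℝ)/N - s)/(1 - (j:ℝ)/N))) - W| ≤ (n:ℝ)*R := by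
    rw [hW_def, ← Finset.sum_sub_distrib]
    refine (Finset.abs_sum_le_sum_abs _ _).trans ?_
    have hb : ∀ j ∈ Icc 1 n,
        |Real.log (1 + S*((j:ℝ)/N - s)/(1 - (j:ℝ)/N))
          - (S*((j:ℝ)/N) + (S - S^2/2)*((j:ℝ)/N)^2 - s*S)| ≤ R := by
      intro j hj
      have := per_term S T s ((j:ℝ)/N) hS0 hS1 hT0 hT12 (by positivity) (hjT j hj)
        hs0.le hsT hST
      rw [hR_def]; exact this
    calc ∑ j ∈ Icc 1 n, |Real.log (1 + S*((j:ℝ)/N - s)/(1 - (j:ℝ)/N))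
          - (S*((j:ℝ)/N) + (S - S^2/2)*((j:ℝ)/N)^2 - s*S)|
        ≤ ∑ _j ∈ Icc 1 n, R := Finset.sum_le_sum hb
      _ = (n:ℝ)*R := by
          rw [Finset.sum_const, Nat.card_Icc, Nat.add_sub_cancel, nsmul_eq_mul]
  have hstep4 : (n:ℝ)*R ≤ (K*(N:ℝ)^(1-δ/2))*(128*B^3*T^3 + 4*B*T^3 + s*B*T + 5*B^2*T*(s+T^2)) :=
    mul_le_mul hn2 hRbar hR0 (by positivity)
  have hEeq : Real.log (d β δ N n) + s*S*(n:ℝ) - S*(n:ℝ)^2/(2*N)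
        - S*(1-S/2)*(n:ℝ)^3/(3*(N:ℝ)^2)
      = ((∑ j ∈ Icc 1 n, Real.log (1 + S*((j:ℝ)/N - s)/(1 - (j:ℝ)/N))) - W)
        + (S*(n:ℝ)/(2*N) + (S-S^2/2)*(3*(n:ℝ)^2+(n:ℝ))/(6*(N:ℝ)^2)) := by
    rw [hlogd, hsumW]; field_simp; ring
  have habs2 : 0 ≤ S*(n:ℝ)/(2*N) + (S-S^2/2)*(3*(n:ℝ)^2+(n:ℝ))/(6*(N:ℝ)^2) := by
    have h2 : (0:ℝ) ≤ 3*(n:ℝ)^2+(n:ℝ) := by positivity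
    exact add_nonneg (div_nonneg (mul_nonneg hS0.le hn0') (by positivity))
      (div_nonneg (mul_nonneg hc0 h2) (by positivity))
  calc |Real.log (d β δ N n) + s * S * (n:ℝ) - S * (n:ℝ)^2 / (2 * (N:ℝ))
        - S * (1 - S / 2) * (n:ℝ)^3 / (3 * (N:ℝ)^2)|
      = |((∑ j ∈ Icc 1 n, Real.log (1 + S*((j:ℝ)/N - s)/(1 - (j:ℝ)/N))) - W)
        + (S*(n:ℝ)/(2*N) + (S-S^2/2)*(3*(n:ℝ)^2+(n:ℝ))/(6*(N:ℝ)^2))| := by rw [hEeq]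
    _ ≤ |(∑ j ∈ Icc 1 n, Real.log (1 + S*((j:ℝ)/N - s)/(1 - (j:ℝ)/N))) - W|
        + |S*(n:ℝ)/(2*N) + (S-S^2/2)*(3*(n:ℝ)^2+(n:ℝ))/(6*(N:ℝ)^2)| := abs_add_le _ _
    _ = |(∑ j ∈ Icc 1 n, Real.log (1 + S*((j:ℝ)/N - s)/(1 - (j:ℝ)/N))) - W|
        + (S*(n:ℝ)/(2*N) + (S-S^2/2)*(3*(n:ℝ)^2+(n:ℝ))/(6*(N:ℝ)^2)) := by
          rw [abs_of_nonneg habs2]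
    _ ≤ (K*(N:ℝ)^(1-δ/2))*(128*B^3*T^3 + 4*B*T^3 + s*B*T + 5*B^2*T*(s+T^2))
        + (B*T/2 + B*T^2) :=
          add_le_add (hΔ.trans hstep4) (add_le_add hq1 hq2)
    _ = G β δ K N := by
          simp only [hB_def, hT_def, hs_def, G]
          ring

lemma rpow_split (x : ℝ) (hx : 0 < x) (a b c : ℝ) (k l : ℕ) :
    x^(a + b*(k:ℝ) + c*(l:ℝ)) = x^a * (x^b)^k * (x^c)^l := by
  rw [Real.rpow_add hx, Real.rpow_add hx, Real.rpow_mul hx.le, Real.rpow_mul hx.le,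
    Real.rpow_natCast, Real.rpow_natCast]

lemma base_tendsto (e : ℝ) (he : e < 0) :
    Tendsto (fun N : ℕ => (N:ℝ)^e) atTop (nhds 0) := by
  have h := tendsto_rpow_neg_atTop (by linarith : 0 < -e)
  simp only [neg_neg] at h
  exact h.comp tendsto_natCast_atTop_atTop

noncomputable def H (β δ K : ℝ) (N : ℕ) : ℝ :=
  8192*K^4*(N:ℝ)^(1-3*β-2*δ) + 16*K^4*(N:ℝ)^(1-β-2*δ) + 4*K^2*(N:ℝ)^(1-β-2*δ)
    + 80*K^2*(N:ℝ)^(1-2*β-2*δ) + 80*K^4*(N:ℝ)^(1-2*β-2*δ)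
    + 2*K*(N:ℝ)^(-β-δ/2) + 4*K^2*(N:ℝ)^(-β-δ)

lemma G_eq_H (β δ K : ℝ) (N : ℕ) (hN0 : (0:ℝ) < N) : G β δ K N = H β δ K N := by
  have e1 : (N:ℝ)^(1-3*β-2*δ) = (N:ℝ)^(1-δ/2) * ((N:ℝ)^(-β))^3 * ((N:ℝ)^(-δ/2))^3 := by
    rw [← rpow_split (N:ℝ) hN0 (1-δ/2) (-β) (-δ/2) 3 3]; norm_num; ring_nf
  have e2 : (N:ℝ)^(1-β-2*δ) = (N:ℝ)^(1-δ/2) * ((N:ℝ)^(-β))^1 * ((N:ℝ)^(-δ/2))^3 := by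
    rw [← rpow_split (N:ℝ) hN0 (1-δ/2) (-β) (-δ/2) 1 3]; norm_num; ring_nf
  have e3 : (N:ℝ)^(1-2*β-2*δ) = (N:ℝ)^(1-δ/2) * ((N:ℝ)^(-β))^2 * ((N:ℝ)^(-δ/2))^3 := by
    rw [← rpow_split (N:ℝ) hN0 (1-δ/2) (-β) (-δ/2) 2 3]; norm_num; ring_nf
  have e4 : (N:ℝ)^(-β-δ/2) = (N:ℝ)^(0:ℝ) * ((N:ℝ)^(-β))^1 * ((N:ℝ)^(-δ/2))^1 := by
    rw [← rpow_split (N:ℝ) hN0 0 (-β) (-δ/2) 1 1]; norm_num; ring_nf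
  have e5 : (N:ℝ)^(-β-δ) = (N:ℝ)^(0:ℝ) * ((N:ℝ)^(-β))^1 * ((N:ℝ)^(-δ/2))^2 := by
    rw [← rpow_split (N:ℝ) hN0 0 (-β) (-δ/2) 1 2]; norm_num; ring_nf
  have e6 : (N:ℝ)^(-δ) = ((N:ℝ)^(-δ/2))^2 := by
    rw [← Real.rpow_natCast ((N:ℝ)^(-δ/2)) 2, ← Real.rpow_mul hN0.le]; norm_num
  rw [H, e1, e2, e3, e4, e5, G, e6, Real.rpow_zero]
  ring

lemma H_tendsto (β δ K : ℝ) (hβ0 : 0 < β) (hδ0 : 0 < δ) (hbd : 1 - β - 2*δ < 0) :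
    Tendsto (fun N : ℕ => H β δ K N) atTop (nhds 0) := by
  have h1 := (base_tendsto (1-3*β-2*δ) (by linarith)).const_mul (8192*K^4)
  have h2 := (base_tendsto (1-β-2*δ) (by linarith)).const_mul (16*K^4)
  have h3 := (base_tendsto (1-β-2*δ) (by linarith)).const_mul (4*K^2)
  have h4 := (base_tendsto (1-2*β-2*δ) (by linarith)).const_mul (80*K^2)
  have h5 := (base_tendsto (1-2*β-2*δ) (by linarith)).const_mul (80*K^4)
  have h6 := (base_tendsto (-β-δ/2) (by linarith)).const_mul (2*K)
  have h7 := (base_tendsto (-β-δ) (by linarith)).const_mul (4*K^2)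
  have h := (((((h1.add h2).add h3).add h4).add h5).add h6).add h7
  simpa [H] using h

/-- In the polynomial regime `𝒫` (so `1 − β − 2δ < 0`), for fixed `K > 0`, uniformly over
`1 ≤ n ≤ ⌊K N^{1−δ/2}⌋`:
`log d_N(n) = −(1−ρ)𝔖_N n + 𝔖_N n²/(2N) + 𝔖_N(1−𝔖_N/2) n³/(3N²) + o(1)`. -/
theorem statement6 (β δ K : ℝ)
    (hβ0 : 0 < β) (hβ1 : β < 1)
    (hδ1 : (1 - β)/2 < δ) (hδ2 : δ < 1 - β)
    (hK : 0 < K) :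
    ∀ ε : ℝ, 0 < ε → ∃ N₀ : ℕ, ∀ N : ℕ, N₀ ≤ N →
      ∀ n ∈ Finset.Icc 1 ⌊K * (N:ℝ)^(1 - δ/2)⌋₊,
        |Real.log (d β δ N n)
            + (1 - (1 - (N:ℝ)^(-δ))) * Sfrak β δ N * (n:ℝ)
            - Sfrak β δ N * (n:ℝ)^2 / (2 * (N:ℝ))
            - Sfrak β δ N * (1 - Sfrak β δ N / 2) * (n:ℝ)^3 / (3 * (N:ℝ)^2)| < ε := by
  intro ε hε
  have hδ0 : 0 < δ := by linarith
  have hbd : 1 - β - 2*δ < 0 := by linarith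
  have cm : ∀ (c e : ℝ), e < 0 → Tendsto (fun N : ℕ => c*(N:ℝ)^e) atTop (nhds 0) :=
    fun c e he => by simpa using (base_tendsto e he).const_mul c
  have hA2 : ∀ᶠ N : ℕ in atTop, (N:ℝ)^(-δ) ≤ 1/2 :=
    (base_tendsto (-δ) (by linarith)).eventually_le_const (by norm_num)
  have hA3 : ∀ᶠ N : ℕ in atTop, K*(N:ℝ)^(-δ/2) ≤ 1/2 :=
    (cm K (-δ/2) (by linarith)).eventually_le_const (by norm_num)
  have hA4 : ∀ᶠ N : ℕ in atTop, (N:ℝ)^(-δ/2) ≤ K :=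
    (base_tendsto (-δ/2) (by linarith)).eventually_le_const hK
  have hA5 : ∀ᶠ N : ℕ in atTop, (N:ℝ)^(-β) ≤ 1/(32*K) :=
    (base_tendsto (-β) (by linarith)).eventually_le_const (by positivity)
  have hA6 : ∀ᶠ N : ℕ in atTop, (N:ℝ)^(-δ/2) ≤ 1 :=
    (base_tendsto (-δ/2) (by linarith)).eventually_le_const (by norm_num)
  have hGe : ∀ᶠ N : ℕ in atTop, G β δ K N < ε := by
    have hGH : ∀ᶠ N : ℕ in atTop, G β δ K N = H β δ K N := by
      filter_upwards [eventually_gt_atTop 0] with N hN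
      exact G_eq_H β δ K N (by exact_mod_cast hN)
    have hGt : Tendsto (fun N : ℕ => G β δ K N) atTop (nhds 0) :=
      (H_tendsto β δ K hβ0 hδ0 hbd).congr' (hGH.mono fun N h => h.symm)
    exact hGt.eventually_lt_const hε
  have hall : ∀ᶠ N : ℕ in atTop,
      ∀ n ∈ Finset.Icc 1 ⌊K * (N:ℝ)^(1 - δ/2)⌋₊,
        |Real.log (d β δ N n)
            + (1 - (1 - (N:ℝ)^(-δ))) * Sfrak β δ N * (n:ℝ)
            - Sfrak β δ N * (n:ℝ)^2 / (2 * (N:ℝ))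
            - Sfrak β δ N * (1 - Sfrak β δ N / 2) * (n:ℝ)^3 / (3 * (N:ℝ)^2)| < ε := by
    filter_upwards [eventually_ge_atTop 1, hA2, hA3, hA4, hA5, hA6, hGe]
      with N h1 h2 h3 h4 h5 h6 hG n hn
    obtain ⟨hn1, hn2⟩ := Finset.mem_Icc.mp hn
    have hN0 : (0:ℝ) < N := by exact_mod_cast Nat.lt_of_lt_of_le Nat.zero_lt_one h1
    have hfl : (0:ℝ) ≤ K * (N:ℝ)^(1 - δ/2) := by positivity
    have hn2' : (n:ℝ) ≤ K*(N:ℝ)^(1-δ/2) :=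
      le_trans (by exact_mod_cast Nat.cast_le.mpr hn2 : (n:ℝ) ≤ (⌊K * (N:ℝ)^(1 - δ/2)⌋₊:ℝ))
        (Nat.floor_le hfl)
    have key := main_est β δ K hK N h1 h2 h3 h4 h5 h6 n hn1 hn2'
    have e : (1 - (1 - (N:ℝ)^(-δ))) = (N:ℝ)^(-δ) := by ring
    rw [e]
    exact lt_of_le_of_lt key hG
  rw [Filter.eventually_atTop] at hall
  obtain ⟨N₀, hN₀⟩ := hall
  exact ⟨N₀, fun N hN => hN₀ N hN⟩

end MullerRatchet6
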